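/- Content-sum formula for adding a border strip: let μ = (μ_1 ≥ … ≥ μ_r > 0) be a Young diagram, k ≥ 1, 1 ≤ i ≤ r+k, with μ_l = 0 for l > r; let m be the least integer j ≥ 0 such that either j = i−1 or μ_{i−j−1} + j ≥ μ_i + k − 1, and let δ = (μ_1, …, μ_{i−m−1}, μ_i+k−m, μ_{i−m}+1, …, μ_{i−1}+1, μ_{i+1}, …, μ_r). If δ is nonincreasing (hence a Young diagram), then 2·∑_{(l,c) cell of δ} (l−c) = 2·∑_{(l,c) cell of μ} (l−c) + 2k(i − μ_i) − k(k+1). -/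

import Mathlib

/-- The length of row `i` (1-indexed) of a Young diagram given as a list;
rows beyond the list have length `0`. -/
def rowLen (lam : List ℕ) (i : ℕ) : ℕ := lam.getD (i - 1) 0

/-- A Young diagram: a nonincreasing finite sequence of positive integers. -/
def IsYoung (lam : List ℕ) : Prop := lam.Pairwise (· ≥ ·) ∧ ∀ x ∈ lam, 0 < x

/-- The candidate diagram `δ = (μ₁, …, μ_{i−m−1}, μ_i+k−m, μ_{i−m}+1, …, μ_{i−1}+1,
μ_{i+1}, …, μ_r)`, as a list of row lengths. -/
def deltaList (mu : List ℕ) (k i m : ℕ) : List ℕ :=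
  (List.range (max i mu.length)).map fun l0 =>
    let t := l0 + 1
    if t < i - m then rowLen mu t
    else if t = i - m then rowLen mu i + k - m
    else if t ≤ i then rowLen mu (t - 1) + 1
    else rowLen mu t

/-- The sum of the contents `l - c` over the cells `(l, c)` of a Young diagram. -/
def contentSum (lam : List ℕ) : ℤ :=
  ∑ l ∈ Finset.range lam.length, ∑ c ∈ Finset.range (lam.getD l 0),
    ((l + 1 : ℤ) - (c + 1 : ℤ))

/-- Twice the content sum of a row of length `a` in (0-indexed) row `l0`. -/
def G (l0 a : ℕ) : ℤ := (a : ℤ) * (2 * (l0 : ℤ) - (a : ℤ) + 1)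

/-- The row-length function underlying `deltaList`. -/
def dfun (mu : List ℕ) (k i m : ℕ) (l0 : ℕ) : ℕ :=
  let t := l0 + 1
  if t < i - m then rowLen mu t
  else if t = i - m then rowLen mu i + k - m
  else if t ≤ i then rowLen mu (t - 1) + 1
  else rowLen mu t

lemma deltaList_eq (mu : List ℕ) (k i m : ℕ) :
    deltaList mu k i m = (List.range (max i mu.length)).map (dfun mu k i m) := rfl

lemma row_eq (l0 a : ℕ) :
    2 * ∑ c ∈ Finset.range a, ((l0 + 1 : ℤ) - (c + 1 : ℤ)) = G l0 a := by
  induction a with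
  | zero => simp [G]
  | succ n ih =>
    rw [Finset.sum_range_succ, mul_add, ih]
    simp only [G]
    push_cast
    ring

lemma two_cs (lam : List ℕ) :
    2 * contentSum lam = ∑ l0 ∈ Finset.range lam.length, G l0 (lam.getD l0 0) := by
  unfold contentSum
  rw [Finset.mul_sum]
  exact Finset.sum_congr rfl fun l0 _ => row_eq l0 (lam.getD l0 0)

lemma rowLen_anti (mu : List ℕ) (h : mu.Pairwise (· ≥ ·)) {s t : ℕ} (hs : 1 ≤ s)
    (hst : s ≤ t) : rowLen mu t ≤ rowLen mu s := by
  unfold rowLen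
  rcases le_or_gt t mu.length with ht | ht
  · rw [List.getD_eq_getElem _ _ (by omega), List.getD_eq_getElem _ _ (by omega)]
    exact h.rel_get_of_le (a := ⟨s - 1, by omega⟩) (b := ⟨t - 1, by omega⟩) (by
      simp [Fin.le_def]; omega)
  · rw [List.getD_eq_default _ _ (by omega)]
    exact Nat.zero_le _

lemma key (mu : List ℕ) (k i : ℕ) :
    ∀ m, m + 1 ≤ i → m ≤ k →
    ∑ l0 ∈ Finset.range (max i mu.length), G l0 (dfun mu k i m l0)
      = (∑ l0 ∈ Finset.range (max i mu.length), G l0 (mu.getD l0 0))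
        + 2 * k * ((i : ℤ) - (rowLen mu i : ℤ)) - k * (k + 1) := by
  intro m
  induction m with
  | zero =>
    intro hi _
    have hpt : ∀ l0 ∈ Finset.range (max i mu.length),
        G l0 (dfun mu k i 0 l0) = G l0 (mu.getD l0 0) +
          (if l0 = i - 1 then G (i-1) (rowLen mu i + k) - G (i-1) (rowLen mu i) else 0) := by
      intro l0 _
      by_cases h : l0 = i - 1
      · subst h
        rw [if_pos rfl]
        have h1 : dfun mu k i 0 (i-1) = rowLen mu i + k := by
          simp only [dfun]
          split_ifs <;> omega
        have h2 : mu.getD (i-1) 0 = rowLen mu i := rfl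
        rw [h1, h2]; ring
      · rw [if_neg h]
        have hr : rowLen mu (l0+1) = mu.getD l0 0 := by simp [rowLen]
        have : dfun mu k i 0 l0 = mu.getD l0 0 := by
          simp only [dfun]
          split_ifs <;> omega
        rw [this]; ring
    rw [Finset.sum_congr rfl hpt, Finset.sum_add_distrib,
      Finset.sum_ite_eq' (Finset.range (max i mu.length)) (i-1)
        (fun _ => G (i-1) (rowLen mu i + k) - G (i-1) (rowLen mu i)),
      if_pos (by simp [Finset.mem_range]; omega)]
    have hc1 : ((i - 1 : ℕ) : ℤ) = (i : ℤ) - 1 := by omega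
    simp only [G]
    push_cast [hc1]
    ring
  | succ m ih =>
    intro h1 h2
    have e1 : dfun mu k i (m+1) (i-m-2) = rowLen mu i + k - (m+1) := by
      simp only [dfun]
      rw [if_neg (by omega), if_pos (by omega)]
    have e2 : dfun mu k i m (i-m-2) = rowLen mu (i-m-1) := by
      simp only [dfun]
      rw [if_pos (by omega)]
      congr 1; omega
    have e3 : dfun mu k i (m+1) (i-m-1) = rowLen mu (i-m-1) + 1 := by
      simp only [dfun]
      rw [if_neg (by omega), if_neg (by omega), if_pos (by omega)]
      congr 2 <;> omega
    have e4 : dfun mu k i m (i-m-1) = rowLen mu i + k - m := by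
      simp only [dfun]
      rw [if_neg (by omega), if_pos (by omega)]
    have eoff : ∀ l0, l0 ≠ i-m-2 → l0 ≠ i-m-1 →
        dfun mu k i (m+1) l0 = dfun mu k i m l0 := by
      intro l0 hp hq
      simp only [dfun]
      split_ifs <;> first | rfl | omega
    set A : ℤ := G (i-m-2) (rowLen mu i + k - (m+1)) - G (i-m-2) (rowLen mu (i-m-1)) with hA
    set B : ℤ := G (i-m-1) (rowLen mu (i-m-1) + 1) - G (i-m-1) (rowLen mu i + k - m) with hB
    have hpt : ∀ l0 ∈ Finset.range (max i mu.length),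
        G l0 (dfun mu k i (m+1) l0) = G l0 (dfun mu k i m l0) +
          ((if l0 = i-m-2 then A else 0) + (if l0 = i-m-1 then B else 0)) := by
      intro l0 _
      by_cases hp : l0 = i-m-2
      · subst hp
        rw [if_pos rfl, if_neg (by omega), e1, e2, hA]; ring
      · by_cases hq : l0 = i-m-1
        · subst hq
          rw [if_neg (by omega), if_pos rfl, e3, e4, hB]; ring
        · rw [if_neg hp, if_neg hq, eoff l0 hp hq]; ring
    rw [Finset.sum_congr rfl hpt, Finset.sum_add_distrib, Finset.sum_add_distrib,
      Finset.sum_ite_eq' (Finset.range (max i mu.length)) (i-m-2) (fun _ => A),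
      Finset.sum_ite_eq' (Finset.range (max i mu.length)) (i-m-1) (fun _ => B),
      if_pos (by simp [Finset.mem_range]; omega),
      if_pos (by simp [Finset.mem_range]; omega),
      ih (by omega) (by omega)]
    have hAB : A + B = 0 := by
      have hc1 : ((rowLen mu i + k - (m+1) : ℕ) : ℤ)
          = (rowLen mu i : ℤ) + k - (m+1) := by omega
      have hc2 : ((rowLen mu i + k - m : ℕ) : ℤ)
          = (rowLen mu i : ℤ) + k - m := by omega
      have hc3 : ((i - m - 2 : ℕ) : ℤ) = (i : ℤ) - m - 2 := by omega
      have hc4 : ((i - m - 1 : ℕ) : ℤ) = (i : ℤ) - m - 1 := by omega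
      simp only [hA, hB, G, hc1, hc2, hc3, hc4]
      push_cast
      ring
    linarith [hAB]

theorem contentSum_deltaList (mu : List ℕ) (hmu : IsYoung mu) (k : ℕ) (hk : 1 ≤ k)
    (i : ℕ) (hi1 : 1 ≤ i) (hi2 : i ≤ mu.length + k) (m : ℕ)
    (hm : m = i - 1 ∨ rowLen mu i + k - 1 ≤ rowLen mu (i - m - 1) + m)
    (hmin : ∀ j < m, ¬ (j = i - 1 ∨ rowLen mu i + k - 1 ≤ rowLen mu (i - j - 1) + j))
    (hsorted : (deltaList mu k i m).Pairwise (· ≥ ·)) :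
    2 * contentSum (deltaList mu k i m) =
      2 * contentSum mu + 2 * k * ((i : ℤ) - (rowLen mu i : ℤ)) - k * (k + 1) := by
  have hm1 : m + 1 ≤ i := by
    by_contra h
    exact hmin (i-1) (by omega) (Or.inl rfl)
  have hm2 : m ≤ k := by
    rcases Nat.eq_zero_or_pos m with h0 | h0
    · omega
    · have h := hmin (m-1) (by omega)
      push_neg at h
      have harg : i - (m-1) - 1 = i - m := by omega
      rw [harg] at h
      have hanti : rowLen mu i ≤ rowLen mu (i-m) :=
        rowLen_anti mu hmu.1 (by omega) (by omega)
      omega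
  have hlen : (deltaList mu k i m).length = max i mu.length := by
    rw [deltaList_eq]; simp
  have hget : ∀ l0 ∈ Finset.range (max i mu.length),
      (deltaList mu k i m).getD l0 0 = dfun mu k i m l0 := by
    intro l0 hl
    rw [deltaList_eq, List.getD_eq_getElem _ _ (by simpa using hl)]
    simp
  rw [two_cs (deltaList mu k i m), two_cs mu, hlen]
  have hmu_ext : ∑ l0 ∈ Finset.range mu.length, G l0 (mu.getD l0 0)
      = ∑ l0 ∈ Finset.range (max i mu.length), G l0 (mu.getD l0 0) := by
    refine Finset.sum_subset (Finset.range_subset_range.2 (le_max_right _ _)) ?_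
    intro x _ hx
    rw [List.getD_eq_default _ _ (by simpa using hx)]
    simp [G]
  rw [hmu_ext, Finset.sum_congr rfl (fun l0 hl => by rw [hget l0 hl])]
  exact key mu k i m hm1 hm2
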